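/- Let A be a unital associative F-algebra with a group homomorphism σ : G → A^× from a finite group G, let U and V be subgroups of G, let φ : V → U be a group isomorphism, let i and j be idempotents of A^U and A^V respectively, and let (c, d) be a φ-witness j ↦ i. Let T be a subgroup of V, let S = φ(T), and let k be an idempotent of A^T with j k = k = k j. Then: c k d is an idempotent of A^S satisfying i (c k d) = c k d = (c k d) i; the pair (c k, k d) is a witness k ↦ c k d for the restriction of φ to an isomorphism T → S; if k' is another idempotent of A^T with j k' = k' = k' j and k k' = 0 = k' k, then (c k d)(c k' d) = 0 = (c k' d)(c k d); and if k is a primitive idempotent of A^T, then c k d is a primitive idempotent of A^S. -/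
import Mathlib


/-- For an interior `G`-algebra `A` with structural homomorphism `σ : G → Aˣ`, subgroups
`U, V ≤ G`, a group isomorphism `φ : V → U` and idempotents `i ∈ A^U`, `j ∈ A^V`, a pair
`(s, s')` is a `φ`-witness `j ↦ i` when `s ∈ i A^φ j`, `s' ∈ j A^{φ⁻¹} i`, `s s' = i` and
`s' s = j`.  Here `A^φ = {a : σ(φ(v)) a = a σ(v) for all v ∈ V}`, and membership in
`i A^φ j` is recorded as lying in `A^φ` and being fixed by left multiplication by `i` and
right multiplication by `j`. -/
def IsWitness {G : Type*} [Group G] {A : Type*} [Ring A] (σ : G →* Aˣ)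
    {U V : Subgroup G} (φ : V ≃* U) (i j s s' : A) : Prop :=
  (∀ v : V, (σ ((φ v : U) : G) : A) * s = s * (σ (v : G) : A)) ∧
    i * s = s ∧ s * j = s ∧
  (∀ u : U, (σ ((φ.symm u : V) : G) : A) * s' = s' * (σ (u : G) : A)) ∧
    j * s' = s' ∧ s' * i = s' ∧
  s * s' = i ∧ s' * s = j

/-- An idempotent `e` of a ring, lying in the subset `S`, is primitive in `S` if `e ≠ 0`
and `e` is not the sum of two nonzero orthogonal idempotents lying in `S`. -/
def IsPrimitiveIdemOn {A : Type*} [Ring A] (S : Set A) (e : A) : Prop :=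
  e * e = e ∧ e ≠ 0 ∧ ∀ e₁ e₂ : A, e₁ ∈ S → e₂ ∈ S → e₁ * e₁ = e₁ → e₂ * e₂ = e₂ →
    e₁ * e₂ = 0 → e₂ * e₁ = 0 → e = e₁ + e₂ → e₁ = 0 ∨ e₂ = 0

/-- Restriction of witnesses to pointed subgroups (from the proof of Lemma 4.4): given a
`φ`-witness `(c, d) : j ↦ i`, a subgroup `T ≤ V` with `S = φ(T)`, and an idempotent
`k ∈ A^T` with `k ≤ j`, then `c k d` is an idempotent of `A^S` with `c k d ≤ i`,
`(c k, k d)` is a witness `k ↦ c k d` for the restriction of `φ` to `T → S`, orthogonal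
choices of `k` yield orthogonal idempotents, and `c k d` is primitive in `A^S` whenever `k`
is primitive in `A^T`. -/
theorem stmt9 (F : Type*) [Field F] (A : Type*) [Ring A] [Algebra F A]
    (G : Type*) [Group G] [Finite G] (σ : G →* Aˣ)
    (U V : Subgroup G) (φ : V ≃* U) (i j : A)
    (hi : i * i = i) (hiU : ∀ u : U, (σ (u : G) : A) * i = i * (σ (u : G) : A))
    (hj : j * j = j) (hjV : ∀ v : V, (σ (v : G) : A) * j = j * (σ (v : G) : A))
    (c d : A) (hcd : IsWitness σ φ i j c d)
    (T : Subgroup G) (hT : T ≤ V) (k : A) (hk : k * k = k)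
    (hkT : ∀ t : T, (σ (t : G) : A) * k = k * (σ (t : G) : A))
    (hjk : j * k = k) (hkj : k * j = k) :
    ((c * k * d) * (c * k * d) = c * k * d ∧
      ∀ t : T, (σ ((φ ⟨(t : G), hT t.2⟩ : U) : G) : A) * (c * k * d)
        = (c * k * d) * (σ ((φ ⟨(t : G), hT t.2⟩ : U) : G) : A)) ∧
    (i * (c * k * d) = c * k * d ∧ (c * k * d) * i = c * k * d) ∧
    ((∀ t : T, (σ ((φ ⟨(t : G), hT t.2⟩ : U) : G) : A) * (c * k) = (c * k) * (σ (t : G) : A)) ∧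
      (c * k * d) * (c * k) = c * k ∧ (c * k) * k = c * k ∧
      (∀ t : T, (σ (t : G) : A) * (k * d) = (k * d) * (σ ((φ ⟨(t : G), hT t.2⟩ : U) : G) : A)) ∧
      k * (k * d) = k * d ∧ (k * d) * (c * k * d) = k * d ∧
      (c * k) * (k * d) = c * k * d ∧ (k * d) * (c * k) = k) ∧
    (∀ k' : A, k' * k' = k' →
      (∀ t : T, (σ (t : G) : A) * k' = k' * (σ (t : G) : A)) →
      j * k' = k' → k' * j = k' → k * k' = 0 → k' * k = 0 →
      (c * k * d) * (c * k' * d) = 0 ∧ (c * k' * d) * (c * k * d) = 0) ∧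
    (IsPrimitiveIdemOn {a : A | ∀ t : T, (σ (t : G) : A) * a = a * (σ (t : G) : A)} k →
      IsPrimitiveIdemOn
        {a : A | ∀ t : T, (σ ((φ ⟨(t : G), hT t.2⟩ : U) : G) : A) * a
          = a * (σ ((φ ⟨(t : G), hT t.2⟩ : U) : G) : A)} (c * k * d)) := by
  obtain ⟨h1, h2, h3, h4, h5, h6, h7, h8⟩ := hcd
  have hdc' : ∀ x : A, d * (c * x) = j * x := fun x => by rw [← mul_assoc, h8]
  have hjk' : ∀ x : A, j * (k * x) = k * x := fun x => by rw [← mul_assoc, hjk]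
  have hkj' : ∀ x : A, k * (j * x) = k * x := fun x => by rw [← mul_assoc, hkj]
  have hk' : ∀ x : A, k * (k * x) = k * x := fun x => by rw [← mul_assoc, hk]
  have hic' : ∀ x : A, i * (c * x) = c * x := fun x => by rw [← mul_assoc, h2]
  have hσc : ∀ t : T, (σ ((φ ⟨(t : G), hT t.2⟩ : U) : G) : A) * c = c * (σ (t : G) : A) :=
    fun t => h1 ⟨(t : G), hT t.2⟩
  have hσd : ∀ t : T, (σ (t : G) : A) * d = d * (σ ((φ ⟨(t : G), hT t.2⟩ : U) : G) : A) := by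
    intro t
    have := h4 (φ ⟨(t : G), hT t.2⟩)
    rwa [MulEquiv.symm_apply_apply] at this
  have hσc' : ∀ (t : T) (x : A),
      (σ ((φ ⟨(t : G), hT t.2⟩ : U) : G) : A) * (c * x) = c * ((σ (t : G) : A) * x) :=
    fun t x => by rw [← mul_assoc, hσc, mul_assoc]
  have hσd' : ∀ (t : T) (x : A),
      (σ (t : G) : A) * (d * x) = d * ((σ ((φ ⟨(t : G), hT t.2⟩ : U) : G) : A) * x) :=
    fun t x => by rw [← mul_assoc, hσd, mul_assoc]
  have hσk' : ∀ (t : T) (x : A), (σ (t : G) : A) * (k * x) = k * ((σ (t : G) : A) * x) :=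
    fun t x => by rw [← mul_assoc, hkT, mul_assoc]
  refine ⟨⟨?_, ?_⟩, ⟨?_, ?_⟩, ⟨?_, ?_, ?_, ?_, ?_, ?_, ?_, ?_⟩, ?_, ?_⟩
  · simp only [mul_assoc, hdc', hjk', hkj', hk']
  · intro t
    simp only [mul_assoc, hσc', hσk', hσd]
  · simp only [mul_assoc, hic']
  · simp only [mul_assoc, h6]
  · intro t
    simp only [mul_assoc, hσc', hkT]
  · simp only [mul_assoc, hdc', hkj', hjk', hk', hk]
  · simp only [mul_assoc, hk]
  · intro t
    simp only [mul_assoc, hσk', hσd]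
  · simp only [mul_assoc, hk']
  · simp only [mul_assoc, hdc', hkj', hjk', hk', hk]
  · simp only [mul_assoc, hk']
  · simp only [mul_assoc, hdc', hkj', hjk', hk', hk]
  · intro k' hk'2 hk'T hjk2 hk'j hkk' hk'k
    constructor
    · simp only [mul_assoc, hdc', hkj']
      rw [← mul_assoc k k' d, hkk', zero_mul, mul_zero]
    · simp only [mul_assoc]
      rw [hdc', ← mul_assoc k' j, hk'j, ← mul_assoc k' k, hk'k, zero_mul, mul_zero]
  · rintro ⟨hkidem, hkne, hksplit⟩
    refine ⟨?_, ?_, ?_⟩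
    · simp only [mul_assoc, hdc', hjk', hkj', hk']
    · intro h0
      apply hkne
      have h0' : ∀ x : A, c * (k * (d * x)) = 0 := fun x => by
        rw [show c * (k * (d * x)) = c * k * d * x by simp only [mul_assoc], h0, zero_mul]
      calc k = k * (d * (c * (k * (d * (c * k))))) := by
              simp only [hdc', hkj', hk', hk]
        _ = k * (d * 0) := by rw [h0']
        _ = 0 := by rw [mul_zero, mul_zero]
    · intro e₁ e₂ he₁S he₂S he₁ he₂ h12 h21 hsum
      have heL₁ : c * k * d * e₁ = e₁ := by rw [hsum, add_mul, he₁, h21, add_zero]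
      have heR₁ : e₁ * (c * k * d) = e₁ := by rw [hsum, mul_add, he₁, h12, add_zero]
      have heL₂ : c * k * d * e₂ = e₂ := by rw [hsum, add_mul, he₂, h12, zero_add]
      have heR₂ : e₂ * (c * k * d) = e₂ := by rw [hsum, mul_add, he₂, h21, zero_add]
      have hL₁ : ∀ x : A, c * (k * (d * (e₁ * x))) = e₁ * x := fun x => by
        rw [show c * (k * (d * (e₁ * x))) = c * k * d * e₁ * x by simp only [mul_assoc], heL₁]
      have hR₁ : ∀ x : A, e₁ * (c * (k * (d * x))) = e₁ * x := fun x => by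
        rw [show c * (k * (d * x)) = c * k * d * x by simp only [mul_assoc], ← mul_assoc, heR₁]
      have hL₂ : ∀ x : A, c * (k * (d * (e₂ * x))) = e₂ * x := fun x => by
        rw [show c * (k * (d * (e₂ * x))) = c * k * d * e₂ * x by simp only [mul_assoc], heL₂]
      have hR₂ : ∀ x : A, e₂ * (c * (k * (d * x))) = e₂ * x := fun x => by
        rw [show c * (k * (d * x)) = c * k * d * x by simp only [mul_assoc], ← mul_assoc, heR₂]
      have he₁' : ∀ x : A, e₁ * (e₁ * x) = e₁ * x := fun x => by rw [← mul_assoc, he₁]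
      have he₂' : ∀ x : A, e₂ * (e₂ * x) = e₂ * x := fun x => by rw [← mul_assoc, he₂]
      have h12' : ∀ x : A, e₁ * (e₂ * x) = 0 := fun x => by rw [← mul_assoc, h12, zero_mul]
      have h21' : ∀ x : A, e₂ * (e₁ * x) = 0 := fun x => by rw [← mul_assoc, h21, zero_mul]
      have he₁S' : ∀ (t : T) (x : A),
          (σ ((φ ⟨(t : G), hT t.2⟩ : U) : G) : A) * (e₁ * x)
            = e₁ * ((σ ((φ ⟨(t : G), hT t.2⟩ : U) : G) : A) * x) := fun t x => by
        rw [← mul_assoc, he₁S t, mul_assoc]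
      have he₂S' : ∀ (t : T) (x : A),
          (σ ((φ ⟨(t : G), hT t.2⟩ : U) : G) : A) * (e₂ * x)
            = e₂ * ((σ ((φ ⟨(t : G), hT t.2⟩ : U) : G) : A) * x) := fun t x => by
        rw [← mul_assoc, he₂S t, mul_assoc]
      have mem₁ : ∀ t : T, (σ (t : G) : A) * (k * (d * (e₁ * (c * k))))
          = (k * (d * (e₁ * (c * k)))) * (σ (t : G) : A) := by
        intro t
        simp only [mul_assoc, hσk', hσd', he₁S', hσc', hkT]
      have mem₂ : ∀ t : T, (σ (t : G) : A) * (k * (d * (e₂ * (c * k))))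
          = (k * (d * (e₂ * (c * k)))) * (σ (t : G) : A) := by
        intro t
        simp only [mul_assoc, hσk', hσd', he₂S', hσc', hkT]
      have idem₁ : (k * (d * (e₁ * (c * k)))) * (k * (d * (e₁ * (c * k))))
          = k * (d * (e₁ * (c * k))) := by
        simp only [mul_assoc, hk', hR₁, he₁']
      have idem₂ : (k * (d * (e₂ * (c * k)))) * (k * (d * (e₂ * (c * k))))
          = k * (d * (e₂ * (c * k))) := by
        simp only [mul_assoc, hk', hR₂, he₂']
      have orth₁ : (k * (d * (e₁ * (c * k)))) * (k * (d * (e₂ * (c * k)))) = 0 := by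
        simp only [mul_assoc, hk', hR₁, h12', mul_zero]
      have orth₂ : (k * (d * (e₂ * (c * k)))) * (k * (d * (e₁ * (c * k)))) = 0 := by
        simp only [mul_assoc, hk', hR₂, h21', mul_zero]
      have hsum' : k = k * (d * (e₁ * (c * k))) + k * (d * (e₂ * (c * k))) := by
        have e : k * (d * (e₁ * (c * k))) + k * (d * (e₂ * (c * k)))
            = k * (d * ((e₁ + e₂) * (c * k))) := by rw [add_mul, mul_add, mul_add]
        rw [e, ← hsum]
        simp only [mul_assoc, hdc', hkj', hjk', hk', hk]
      rcases hksplit (k * (d * (e₁ * (c * k)))) (k * (d * (e₂ * (c * k)))) mem₁ mem₂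
        idem₁ idem₂ orth₁ orth₂ hsum' with h | h
      · left
        have key : e₁ = c * (k * ((k * (d * (e₁ * (c * k)))) * (k * d))) := by
          have : e₁ * (c * (k * d)) = e₁ := by
            rw [show c * (k * d) = c * k * d from (mul_assoc c k d).symm, heR₁]
          have hb : c * (k * (d * e₁)) = e₁ := by
            rw [show c * (k * (d * e₁)) = c * k * d * e₁ by simp only [mul_assoc], heL₁]
          simp only [mul_assoc, hk', hL₁, this, hb]
        rw [h, zero_mul, mul_zero, mul_zero] at key
        exact key
      · right
        have key : e₂ = c * (k * ((k * (d * (e₂ * (c * k)))) * (k * d))) := by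
          have : e₂ * (c * (k * d)) = e₂ := by
            rw [show c * (k * d) = c * k * d from (mul_assoc c k d).symm, heR₂]
          have hb : c * (k * (d * e₂)) = e₂ := by
            rw [show c * (k * (d * e₂)) = c * k * d * e₂ by simp only [mul_assoc], heL₂]
          simp only [mul_assoc, hk', hL₂, this, hb]
        rw [h, zero_mul, mul_zero, mul_zero] at key
        exact key
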